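/- Among linear forecasts Ŷ_s = α + βᵀX_s, the squared loss E[(Ŷ_S − Y_S)²] is minimized subject to the constraint cov[Y_S − Ŷ_S, X_S − μ_S] = 0 by the FEO forecast (α_F, β_F) with β_F = var[X_S − μ_S]⁻¹ cov[X_S − μ_S, Y_S] and α_F = E[Y_S] − β_Fᵀμ̄. -/

import Mathlib

open MeasureTheory Matrix Finset

/-- Among linear forecasts `Ŷ = α + βᵀX_S`, the squared loss `E[(Ŷ − Y_S)²]` is minimized
subject to `cov[Y_S − Ŷ, X_S − μ_S] = 0` by the FEO forecast `(α_F, β_F)` with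
`β_F = var[X_S − μ_S]⁻¹ cov[X_S − μ_S, Y_S]` and `α_F = E[Y_S] − β_Fᵀμ̄`. -/
theorem stmt12
    {Ω : Type*} [MeasurableSpace Ω] (P : Measure Ω) [IsProbabilityMeasure P]
    (n d : ℕ) (S : Ω → Fin (n + 1)) (hS : Measurable S)
    (X : Ω → Fin d → ℝ) (Y : Ω → ℝ) (ε : Ω → ℝ)
    (p : Fin (n + 1) → ℝ) (μv : Fin (n + 1) → Fin d → ℝ)
    (Sig : Fin (n + 1) → Matrix (Fin d) (Fin d) ℝ)
    (αb : Fin (n + 1) → ℝ) (βb : Fin (n + 1) → Fin d → ℝ)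
    (hp : ∀ s, 0 < p s)
    (hmeas : ∀ s, P {ω | S ω = s} = ENNReal.ofReal (p s))
    (hmean : ∀ s i, ∫ ω in {ω | S ω = s}, X ω i ∂P = p s * μv s i)
    (hcovX : ∀ s i j,
      ∫ ω in {ω | S ω = s}, (X ω i - μv s i) * (X ω j - μv s j) ∂P = p s * Sig s i j)
    (hSigPD : ∀ s, (Sig s).PosDef)
    (hY : ∀ ω, Y ω = αb (S ω) + βb (S ω) ⬝ᵥ X ω + ε ω)
    (hε : ∀ s, ∫ ω in {ω | S ω = s}, ε ω ∂P = 0)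
    (hXε : ∀ s i, ∫ ω in {ω | S ω = s}, (X ω i - μv s i) * ε ω ∂P = 0)
    (μbar : Fin d → ℝ) (hμbar : μbar = ∑ s, p s • μv s)
    (hint : ∀ (a : ℝ) (b : Fin d → ℝ),
      Integrable (fun ω => (a + b ⬝ᵥ X ω - Y ω) ^ 2) P)
    -- `var[X_S − μ_S]` and `cov[X_S − μ_S, Y_S]`
    (Vc : Matrix (Fin d) (Fin d) ℝ)
    (hVc : ∀ i j, Vc i j =
      (∫ ω, (X ω i - μv (S ω) i) * (X ω j - μv (S ω) j) ∂P)
        - (∫ ω, (X ω i - μv (S ω) i) ∂P) * (∫ ω, (X ω j - μv (S ω) j) ∂P))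
    (cv : Fin d → ℝ)
    (hcv : ∀ i, cv i =
      (∫ ω, (X ω i - μv (S ω) i) * Y ω ∂P)
        - (∫ ω, (X ω i - μv (S ω) i) ∂P) * (∫ ω, Y ω ∂P))
    (βF : Fin d → ℝ) (hβF : βF = Vc⁻¹ *ᵥ cv)
    (αF : ℝ) (hαF : αF = (∫ ω, Y ω ∂P) - βF ⬝ᵥ μbar) :
    -- the FEO forecast satisfies the constraint
    (∀ i, (∫ ω, (Y ω - (αF + βF ⬝ᵥ X ω)) * (X ω i - μv (S ω) i) ∂P)
        - (∫ ω, (Y ω - (αF + βF ⬝ᵥ X ω)) ∂P) * (∫ ω, (X ω i - μv (S ω) i) ∂P) = 0) ∧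
    -- and minimizes the squared loss among all constrained linear forecasts
    (∀ (a : ℝ) (b : Fin d → ℝ),
      (∀ i, (∫ ω, (Y ω - (a + b ⬝ᵥ X ω)) * (X ω i - μv (S ω) i) ∂P)
          - (∫ ω, (Y ω - (a + b ⬝ᵥ X ω)) ∂P) * (∫ ω, (X ω i - μv (S ω) i) ∂P) = 0) →
      ∫ ω, (αF + βF ⬝ᵥ X ω - Y ω) ^ 2 ∂P ≤ ∫ ω, (a + b ⬝ᵥ X ω - Y ω) ^ 2 ∂P) := by
  classical
  have hAm : ∀ s : Fin (n+1), MeasurableSet {ω | S ω = s} := fun s =>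
    hS (measurableSet_singleton s)
  have hPs : ∀ s, (P {ω | S ω = s}).toReal = p s := fun s => by
    rw [hmeas s, ENNReal.toReal_ofReal (hp s).le]
  have hsplit : ∀ f : Ω → ℝ, Integrable f P →
      ∫ ω, f ω ∂P = ∑ s, ∫ ω in {ω | S ω = s}, f ω ∂P := by
    intro f hf
    have hu : (⋃ s : Fin (n+1), {ω | S ω = s}) = Set.univ := by
      ext ω; simp [Set.mem_iUnion]
    have hd : Pairwise (Function.onFun Disjoint fun s : Fin (n+1) => {ω | S ω = s}) := by
      intro s t hst
      rw [Function.onFun, Set.disjoint_left]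
      intro ω h1 h2
      exact hst (h1.symm.trans h2)
    rw [← setIntegral_univ, ← hu, integral_iUnion_fintype hAm hd fun s => hf.integrableOn]
  -- integrability of monomials
  have hdot1 : ∀ (i : Fin d) (ω : Ω), (Pi.single i (1:ℝ)) ⬝ᵥ X ω = X ω i := fun i ω => by
    rw [single_dotProduct, one_mul]
  have iY2 : Integrable (fun ω => Y ω * Y ω) P :=
    (hint 0 0).congr (Filter.Eventually.of_forall fun ω => by
      simp only [Pi.add_apply, Pi.sub_apply, Pi.neg_apply, zero_dotProduct, add_dotProduct, smul_dotProduct, smul_eq_mul, single_dotProduct, one_mul]; ring)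
  have iY : Integrable Y P := by
    have h2 : Integrable (fun ω => 1 - 2 * Y ω) P :=
      ((hint 1 0).sub (hint 0 0)).congr (Filter.Eventually.of_forall fun ω => by
        simp only [Pi.add_apply, Pi.sub_apply, Pi.neg_apply, zero_dotProduct, add_dotProduct, smul_dotProduct, smul_eq_mul, single_dotProduct, one_mul]; ring)
    exact (((integrable_const (1:ℝ)).sub h2).const_mul (1/2)).congr
      (Filter.Eventually.of_forall fun ω => by simp only [Pi.add_apply, Pi.sub_apply, Pi.neg_apply, zero_dotProduct, add_dotProduct, smul_dotProduct, smul_eq_mul, single_dotProduct, one_mul]; ring)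
  have iXmY : ∀ i, Integrable (fun ω => X ω i - Y ω) P := fun i => by
    have h2 : Integrable (fun ω => 1 + 2 * (X ω i - Y ω)) P :=
      ((hint 1 (Pi.single i 1)).sub (hint 0 (Pi.single i 1))).congr
        (Filter.Eventually.of_forall fun ω => by simp only [Pi.add_apply, Pi.sub_apply, Pi.neg_apply, zero_dotProduct, add_dotProduct, smul_dotProduct, smul_eq_mul, single_dotProduct, one_mul]; ring)
    exact ((h2.sub (integrable_const 1)).const_mul (1/2)).congr
      (Filter.Eventually.of_forall fun ω => by simp only [Pi.add_apply, Pi.sub_apply, Pi.neg_apply, zero_dotProduct, add_dotProduct, smul_dotProduct, smul_eq_mul, single_dotProduct, one_mul]; ring)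
  have iX : ∀ i, Integrable (fun ω => X ω i) P := fun i =>
    ((iXmY i).add iY).congr (Filter.Eventually.of_forall fun ω => by simp only [Pi.add_apply, Pi.sub_apply, Pi.neg_apply, zero_dotProduct, add_dotProduct, smul_dotProduct, smul_eq_mul, single_dotProduct, one_mul]; ring)
  have iX2 : ∀ i, Integrable (fun ω => X ω i * X ω i) P := fun i => by
    have h2 := ((hint 0 (Pi.single i (2:ℝ))).add (hint 0 0)).sub
      ((hint 0 (Pi.single i 1)).const_mul 2)
    exact (h2.const_mul (1/2)).congr (Filter.Eventually.of_forall fun ω => by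
      simp only [Pi.add_apply, Pi.sub_apply, Pi.neg_apply, zero_dotProduct, add_dotProduct, smul_dotProduct, smul_eq_mul, single_dotProduct, one_mul]; ring)
  have iXY : ∀ i, Integrable (fun ω => X ω i * Y ω) P := fun i => by
    have h2 := ((iX2 i).add iY2).sub (hint 0 (Pi.single i 1))
    exact (h2.const_mul (1/2)).congr (Filter.Eventually.of_forall fun ω => by
      simp only [Pi.add_apply, Pi.sub_apply, Pi.neg_apply, zero_dotProduct, add_dotProduct, smul_dotProduct, smul_eq_mul, single_dotProduct, one_mul]; ring)
  have iXX : ∀ i j, Integrable (fun ω => X ω i * X ω j) P := fun i j => by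
    have h2 := (((hint 0 (Pi.single i 1 + Pi.single j 1)).sub
      (hint 0 (Pi.single i 1))).sub (hint 0 (Pi.single j 1))).add iY2
    exact (h2.const_mul (1/2)).congr (Filter.Eventually.of_forall fun ω => by
      simp only [Pi.add_apply, Pi.sub_apply, Pi.neg_apply, zero_dotProduct, add_dotProduct, smul_dotProduct, smul_eq_mul, single_dotProduct, one_mul]; ring)
  -- multiplication by bounded functions of S
  have hgS : ∀ (g : Fin (n+1) → ℝ) {f : Ω → ℝ}, Integrable f P →
      Integrable (fun ω => g (S ω) * f ω) P := by
    intro g f hf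
    obtain ⟨C, hC⟩ := Finite.exists_le fun s => ‖g s‖
    exact hf.bdd_mul ((measurable_from_top (f := g)).comp hS).aestronglyMeasurable
      (Filter.Eventually.of_forall fun ω => hC (S ω))
  have iW : ∀ g : Fin (n+1) → ℝ, Integrable (fun ω => g (S ω)) P := fun g =>
    (hgS g (integrable_const 1)).congr (Filter.Eventually.of_forall fun ω => by simp only [Pi.add_apply, Pi.sub_apply, Pi.neg_apply, zero_dotProduct, add_dotProduct, smul_dotProduct, smul_eq_mul, single_dotProduct, one_mul]; ring)
  have iZ : ∀ i, Integrable (fun ω => X ω i - μv (S ω) i) P := fun i =>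
    (iX i).sub (iW fun s => μv s i)
  have iZZ : ∀ i j, Integrable (fun ω => (X ω i - μv (S ω) i) * (X ω j - μv (S ω) j)) P :=
    fun i j => ((((iXX i j).sub (hgS (fun s => μv s i) (iX j))).sub
      (hgS (fun s => μv s j) (iX i))).add (iW fun s => μv s i * μv s j)).congr
      (Filter.Eventually.of_forall fun ω => by simp only [Pi.add_apply, Pi.sub_apply, Pi.neg_apply, zero_dotProduct, add_dotProduct, smul_dotProduct, smul_eq_mul, single_dotProduct, one_mul]; ring)
  have iZY : ∀ i, Integrable (fun ω => (X ω i - μv (S ω) i) * Y ω) P := fun i =>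
    ((iXY i).sub (hgS (fun s => μv s i) iY)).congr
      (Filter.Eventually.of_forall fun ω => by simp only [Pi.add_apply, Pi.sub_apply, Pi.neg_apply, zero_dotProduct, add_dotProduct, smul_dotProduct, smul_eq_mul, single_dotProduct, one_mul]; ring)
  have iWZ : ∀ (g : Fin (n+1) → ℝ) i,
      Integrable (fun ω => g (S ω) * (X ω i - μv (S ω) i)) P := fun g i => hgS g (iZ i)
  have iZX : ∀ i j, Integrable (fun ω => (X ω i - μv (S ω) i) * X ω j) P := fun i j =>
    ((iZZ i j).add (iWZ (fun s => μv s j) i)).congr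
      (Filter.Eventually.of_forall fun ω => by simp only [Pi.add_apply, Pi.sub_apply, Pi.neg_apply, zero_dotProduct, add_dotProduct, smul_dotProduct, smul_eq_mul, single_dotProduct, one_mul]; ring)
  -- per-stratum facts
  have hmemS : ∀ (s : Fin (n+1)) {ω : Ω}, ω ∈ {ω | S ω = s} → S ω = s := by
    intro s ω hω; exact hω
  have hZs : ∀ s i, ∫ ω in {ω | S ω = s}, (X ω i - μv s i) ∂P = 0 := by
    intro s i
    rw [integral_sub ((iX i).integrableOn) (integrable_const _).integrableOn,
      hmean s i, setIntegral_const, smul_eq_mul, measureReal_def, hPs s]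
    ring
  have hZSs : ∀ s i, ∫ ω in {ω | S ω = s}, (X ω i - μv (S ω) i) ∂P = 0 := by
    intro s i
    rw [setIntegral_congr_fun (hAm s)
      (g := fun ω => X ω i - μv s i) (fun ω hω => by rw [hmemS s hω]), hZs s i]
  have hZ0 : ∀ i, ∫ ω, (X ω i - μv (S ω) i) ∂P = 0 := fun i => by
    rw [hsplit _ (iZ i)]
    exact Finset.sum_eq_zero fun s _ => hZSs s i
  have hEX : ∀ i, ∫ ω, X ω i ∂P = μbar i := fun i => by
    rw [hsplit _ (iX i), hμbar]
    simp only [Finset.sum_apply, Pi.smul_apply, smul_eq_mul]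
    exact Finset.sum_congr rfl fun s _ => hmean s i
  have hVcM : ∀ i j, Vc i j = ∑ s, p s * Sig s i j := by
    intro i j
    rw [hVc i j, hZ0 i, hZ0 j, zero_mul, sub_zero, hsplit _ (iZZ i j)]
    refine Finset.sum_congr rfl fun s _ => ?_
    rw [setIntegral_congr_fun (hAm s)
      (g := fun ω => (X ω i - μv s i) * (X ω j - μv s j))
      (fun ω hω => by rw [hmemS s hω]), hcovX s i j]
  have hWZ0 : ∀ (g : Fin (n+1) → ℝ) i,
      ∫ ω, g (S ω) * (X ω i - μv (S ω) i) ∂P = 0 := by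
    intro g i
    rw [hsplit _ (iWZ g i)]
    refine Finset.sum_eq_zero fun s _ => ?_
    rw [setIntegral_congr_fun (hAm s)
      (g := fun ω => g s * (X ω i - μv s i)) (fun ω hω => by rw [hmemS s hω]),
      integral_const_mul, hZs s i, mul_zero]
  have hZX : ∀ i j, ∫ ω, (X ω i - μv (S ω) i) * X ω j ∂P = Vc i j := by
    intro i j
    have hpt : ∀ ω, (X ω i - μv (S ω) i) * X ω j
        = (X ω i - μv (S ω) i) * (X ω j - μv (S ω) j)
          + μv (S ω) j * (X ω i - μv (S ω) i) := fun ω => by ring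
    rw [integral_congr_ae (Filter.Eventually.of_forall hpt),
      integral_add (iZZ i j) (iWZ (fun s => μv s j) i), hWZ0 (fun s => μv s j) i, add_zero,
      hVc i j, hZ0 i, hZ0 j, zero_mul, sub_zero]
  have hcv' : ∀ i, cv i = ∫ ω, (X ω i - μv (S ω) i) * Y ω ∂P := fun i => by
    rw [hcv i, hZ0 i, zero_mul, sub_zero]
  -- Vc is positive definite
  have hq : ∀ x : Fin d → ℝ, x ⬝ᵥ (Vc *ᵥ x) = ∑ s, p s * (x ⬝ᵥ (Sig s *ᵥ x)) := by
    intro x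
    simp only [dotProduct, Matrix.mulVec, hVcM, Finset.sum_mul, Finset.mul_sum]
    refine Eq.trans (Finset.sum_congr rfl fun i _ => Finset.sum_comm) ?_
    rw [Finset.sum_comm]
    exact Finset.sum_congr rfl fun s _ => Finset.sum_congr rfl fun i _ =>
      Finset.sum_congr rfl fun j _ => by ring
  have hVcPD : Vc.PosDef := by
    rw [Matrix.posDef_iff_dotProduct_mulVec]
    constructor
    · have hsym : ∀ i j, Vc j i = Vc i j := by
        intro i j
        rw [hVcM, hVcM]
        refine Finset.sum_congr rfl fun s _ => ?_
        have h1 := congrFun (congrFun (hSigPD s).1 i) j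
        rw [Matrix.conjTranspose_apply, star_trivial] at h1
        rw [h1]
      ext i j
      rw [Matrix.conjTranspose_apply, star_trivial, hsym]
    · intro x hx
      have hsx : star x = x := by funext i; exact star_trivial _
      rw [hsx, hq x]
      refine Finset.sum_pos (fun s _ => mul_pos (hp s) ?_) Finset.univ_nonempty
      have h2 := (hSigPD s).dotProduct_mulVec_pos hx
      rwa [hsx] at h2
  have hdet : IsUnit Vc.det := hVcPD.det_pos.ne'.isUnit
  -- the constraint expression
  have hCon : ∀ (a : ℝ) (b : Fin d → ℝ) (i : Fin d),
      (∫ ω, (Y ω - (a + b ⬝ᵥ X ω)) * (X ω i - μv (S ω) i) ∂P)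
        - (∫ ω, (Y ω - (a + b ⬝ᵥ X ω)) ∂P) * (∫ ω, (X ω i - μv (S ω) i) ∂P)
        = cv i - (Vc *ᵥ b) i := by
    intro a b i
    rw [hZ0 i, mul_zero, sub_zero]
    have hpt : ∀ ω, (Y ω - (a + b ⬝ᵥ X ω)) * (X ω i - μv (S ω) i)
        = (X ω i - μv (S ω) i) * Y ω - a * (X ω i - μv (S ω) i)
          - ∑ j, b j * ((X ω i - μv (S ω) i) * X ω j) := by
      intro ω
      have h1 : b ⬝ᵥ X ω = ∑ j, b j * X ω j := rfl
      have h2 : ∑ j, b j * ((X ω i - μv (S ω) i) * X ω j)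
          = (X ω i - μv (S ω) i) * ∑ j, b j * X ω j := by
        rw [Finset.mul_sum]
        exact Finset.sum_congr rfl fun j _ => by ring
      rw [h1, h2]; ring
    have iA : Integrable (fun ω => (X ω i - μv (S ω) i) * Y ω
        - a * (X ω i - μv (S ω) i)) P := (iZY i).sub ((iZ i).const_mul a)
    rw [integral_congr_ae (Filter.Eventually.of_forall hpt),
      integral_sub iA (integrable_finset_sum _ fun j _ => (iZX i j).const_mul (b j)),
      integral_sub (iZY i) ((iZ i).const_mul a),
      integral_finset_sum _ (fun j _ => (iZX i j).const_mul (b j))]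
    simp only [integral_const_mul]
    rw [hZ0 i, mul_zero, sub_zero, ← hcv' i]
    congr 1
    have h3 : (Vc *ᵥ b) i = ∑ j, Vc i j * b j := rfl
    rw [h3]
    exact Finset.sum_congr rfl fun j _ => by rw [hZX i j]; ring
  refine ⟨fun i => ?_, ?_⟩
  · rw [hCon αF βF i, hβF, Matrix.mulVec_mulVec, Matrix.mul_nonsing_inv _ hdet,
      Matrix.one_mulVec, sub_self]
  · intro a b hb
    have hVb : Vc *ᵥ b = cv := by
      funext i
      have h4 := hb i
      rw [hCon a b i] at h4
      linarith
    have hbF : b = βF := by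
      rw [hβF, ← hVb, Matrix.mulVec_mulVec, Matrix.nonsing_inv_mul _ hdet, Matrix.one_mulVec]
    subst hbF
    have iBX : ∀ c : Fin d → ℝ, Integrable (fun ω => c ⬝ᵥ X ω) P := fun c =>
      (integrable_finset_sum _ fun j _ => (iX j).const_mul (c j)).congr
        (Filter.Eventually.of_forall fun ω => rfl)
    have iG : Integrable (fun ω => αF + b ⬝ᵥ X ω - Y ω) P :=
      ((integrable_const αF).add (iBX b)).sub iY
    have hEBX : ∫ ω, b ⬝ᵥ X ω ∂P = b ⬝ᵥ μbar := by
      have h5 : (fun ω => b ⬝ᵥ X ω) = fun ω => ∑ j, b j * X ω j := rfl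
      rw [h5, integral_finset_sum _ (fun j _ => (iX j).const_mul (b j))]
      simp only [integral_const_mul]
      show _ = ∑ j, b j * μbar j
      exact Finset.sum_congr rfl fun j _ => by rw [hEX j]
    have hEG : ∫ ω, (αF + b ⬝ᵥ X ω - Y ω) ∂P = 0 := by
      have iC : Integrable (fun ω => αF + b ⬝ᵥ X ω) P := (integrable_const αF).add (iBX b)
      rw [integral_sub iC iY, integral_add (integrable_const αF) (iBX b),
        integral_const, hEBX, hαF]
      simp [measure_univ]
    have hptd : ∀ ω, (a + b ⬝ᵥ X ω - Y ω)^2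
        = (αF + b ⬝ᵥ X ω - Y ω)^2 + (2*(a - αF)) * (αF + b ⬝ᵥ X ω - Y ω)
          + (a - αF)^2 := fun ω => by ring
    calc ∫ ω, (αF + b ⬝ᵥ X ω - Y ω)^2 ∂P
        ≤ ∫ ω, (αF + b ⬝ᵥ X ω - Y ω)^2 ∂P + (a - αF)^2 :=
          le_add_of_nonneg_right (sq_nonneg _)
      _ = ∫ ω, (a + b ⬝ᵥ X ω - Y ω)^2 ∂P := by
          have iD : Integrable (fun ω => (αF + b ⬝ᵥ X ω - Y ω)^2
              + (2*(a - αF)) * (αF + b ⬝ᵥ X ω - Y ω)) P :=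
            (hint αF b).add (iG.const_mul (2*(a - αF)))
          rw [integral_congr_ae (Filter.Eventually.of_forall hptd),
            integral_add iD (integrable_const _),
            integral_add (hint αF b) (iG.const_mul (2*(a - αF))),
            integral_const_mul, hEG, integral_const]
          simp [measure_univ]
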